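/- arXiv:2605.03368 — 2 statements merged into one kernel-verified Lean document; each statement's English description precedes it below -/
import Mathlib

section
/- Let G be a finite groupoid, H and K subgroupoids, and g a morphism of G. The double coset H g K = {h g k : h ∈ H₁, k ∈ K₁, dom h = cod g, cod k = dom g} is in bijection with the set of objects of the connected component of g's corresponding object in the comma category Incl_K ↓ Incl_H. In particular, morphisms g, g' of G lie in the same double coset iff the corresponding objects of Incl_K ↓ Incl_H are connected. -/
open CategoryTheory

variable {G : Type} [Groupoid G]

/-- The double coset `H g K` of a morphism `g : a ⟶ b`, as a set of morphisms of `G`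
(encoded as triples `⟨dom, cod, morphism⟩`). -/
def doubleCoset (H K : Subgroupoid G) {a b : G} (g : a ⟶ b) : Set (Σ s t : G, s ⟶ t) :=
  {m | ∃ (s t : G) (h : b ⟶ s) (k : t ⟶ a),
    h ∈ H.arrows b s ∧ k ∈ K.arrows t a ∧ m = ⟨t, s, k ≫ g ≫ h⟩}

lemma doubleCoset_objs {H K : Subgroupoid G} {a b : G} {g : a ⟶ b}
    {m : Σ s t : G, s ⟶ t} (hm : m ∈ doubleCoset H K g) :
    m.1 ∈ K.objs ∧ m.2.1 ∈ H.objs := by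
  obtain ⟨s, t, h, k, hh, hk, rfl⟩ := hm
  exact ⟨K.mem_objs_of_src hk, H.mem_objs_of_tgt hh⟩

lemma doubleCoset_iff (H K : Subgroupoid G) {a b : G} (g : a ⟶ b)
    (ha : a ∈ K.objs) (hb : b ∈ H.objs)
    (a' b' : G) (g' : a' ⟶ b') (ha' : a' ∈ K.objs) (hb' : b' ∈ H.objs) :
    (⟨a', b', g'⟩ : Σ s t : G, s ⟶ t) ∈ doubleCoset H K g ↔
      Nonempty (({ left := ⟨a', ha'⟩, right := ⟨b', hb'⟩, hom := g' } :
          Comma K.hom H.hom) ⟶ { left := ⟨a, ha⟩, right := ⟨b, hb⟩, hom := g }) := by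
  constructor
  · rintro ⟨s, t, h, k, hh, hk, heq⟩
    obtain ⟨rfl, heq2⟩ := Sigma.mk.inj_iff.mp heq
    obtain ⟨rfl, heq3⟩ := Sigma.mk.inj_iff.mp (eq_of_heq heq2)
    have hg' : g' = k ≫ g ≫ h := eq_of_heq heq3
    refine ⟨⟨⟨k, hk⟩, ⟨Groupoid.inv h, H.inv hh⟩, ?_⟩⟩
    show k ≫ g = g' ≫ Groupoid.inv h
    simp [hg']
  · rintro ⟨⟨⟨k, hk⟩, ⟨h, hh⟩, w⟩⟩
    have w' : k ≫ g = g' ≫ h := w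
    refine ⟨b', a', Groupoid.inv h, k, H.inv hh, hk, ?_⟩
    have : g' = k ≫ g ≫ Groupoid.inv h := by
      rw [← Category.assoc, w']; simp
    simp [this]

/-- for subgroupoids `H`, `K` of `G` and a morphism `g : a ⟶ b` with
`a ∈ K₀` and `b ∈ H₀`, the double coset `H g K` is in bijection with the set of objects of
the connected component, in the comma category `Incl_K ↓ Incl_H`, of the object
corresponding to `g`; moreover a morphism `g'` lies in `H g K` iff its corresponding object
is connected to that of `g`. -/
theorem stmt_8 (H K : Subgroupoid G) {a b : G} (g : a ⟶ b)
    (ha : a ∈ K.objs) (hb : b ∈ H.objs) :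
    Nonempty ((doubleCoset H K g) ≃
      {p : Comma K.hom H.hom //
        Nonempty (p ⟶ { left := ⟨a, ha⟩, right := ⟨b, hb⟩, hom := g })}) ∧
    (∀ (a' b' : G) (g' : a' ⟶ b') (ha' : a' ∈ K.objs) (hb' : b' ∈ H.objs),
      (⟨a', b', g'⟩ : Σ s t : G, s ⟶ t) ∈ doubleCoset H K g ↔
        Nonempty (({ left := ⟨a', ha'⟩, right := ⟨b', hb'⟩, hom := g' } :
            Comma K.hom H.hom) ⟶ { left := ⟨a, ha⟩, right := ⟨b, hb⟩, hom := g })) := by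
  constructor
  · refine ⟨{
      toFun := fun m => ⟨⟨⟨m.1.1, (doubleCoset_objs m.2).1⟩,
        ⟨m.1.2.1, (doubleCoset_objs m.2).2⟩, m.1.2.2⟩,
        (doubleCoset_iff H K g ha hb _ _ _ _ _).mp m.2⟩
      invFun := fun p => ⟨⟨p.1.left.val, p.1.right.val, p.1.hom⟩,
        (doubleCoset_iff H K g ha hb _ _ _ p.1.left.prop p.1.right.prop).mpr p.2⟩
      left_inv := fun m => rfl
      right_inv := fun p => rfl }⟩
  · exact doubleCoset_iff H K g ha hb
end

section
/- Let G be a finite groupoid and H, K wide subgroupoids. There is a ℂ-linear isomorphism between ℂ_{H\G/K} (functions φ : G₁ → ℂ with φ(h⁻¹ g k) = φ(g) for all composable h ∈ H₁, k ∈ K₁) and the vector space of natural transformations Y_H → Y_K, where Y_H(a) is the space of functions on Mor_G(−,a) invariant under right precomposition by morphisms of H (and similarly Y_K), with G acting via g·f = f(g⁻¹∘−). In particular, the dimension of the space of natural transformations Y_H → Y_K equals the number of double cosets |H\G/K|. -/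
open CategoryTheory

variable {G : Type} [Groupoid G]

/-- The space `ℂ_{H\G/K}` of functions on the morphisms of `G` invariant under
`g ↦ h⁻¹ g k` for `h ∈ H₁`, `k ∈ K₁`. -/
noncomputable def dcFun (H K : Subgroupoid G) : Submodule ℂ ((Σ a b : G, a ⟶ b) → ℂ) where
  carrier := {φ | ∀ {a b s t : G} (g : a ⟶ b) (h : s ⟶ b) (k : t ⟶ a),
    h ∈ H.arrows s b → k ∈ K.arrows t a →
    φ ⟨t, s, k ≫ g ≫ Groupoid.inv h⟩ = φ ⟨a, b, g⟩}
  add_mem' := fun hφ hψ => by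
    intro a b s t g h k hh hk
    simp only [Pi.add_apply, hφ g h k hh hk, hψ g h k hh hk]
  zero_mem' := by
    intro a b s t g h k hh hk
    rfl
  smul_mem' := fun c φ hφ => by
    intro a b s t g h k hh hk
    simp only [Pi.smul_apply, hφ g h k hh hk]

/-- The space of functions on `Mor_G(−,a)` invariant under right precomposition with
morphisms of `H`. -/
noncomputable def YHsub (H : Subgroupoid G) (a : G) :
    Submodule ℂ ((Σ y : G, y ⟶ a) → ℂ) where
  carrier := {φ | ∀ (y z : G) (g : z ⟶ a) (h : y ⟶ z), h ∈ H.arrows y z →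
    φ ⟨y, h ≫ g⟩ = φ ⟨z, g⟩}
  add_mem' := fun hφ hψ => by
    intro y z g h hh
    simp only [Pi.add_apply, hφ y z g h hh, hψ y z g h hh]
  zero_mem' := by
    intro y z g h hh
    rfl
  smul_mem' := fun c φ hφ => by
    intro y z g h hh
    simp only [Pi.smul_apply, hφ y z g h hh]

/-- The functor `Y_H : G ⥤ Vect_ℂ`, with `G` acting by `g · f = f(g⁻¹ ∘ −)`. -/
noncomputable def YHfun (H : Subgroupoid G) : G ⥤ ModuleCat ℂ where
  obj a := ModuleCat.of ℂ (YHsub H a)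
  map := fun {a a'} g => ModuleCat.ofHom
    { toFun := fun f => ⟨fun k => f.1 ⟨k.1, k.2 ≫ Groupoid.inv g⟩, by
        intro y z g' h hh
        have := f.2 y z (g' ≫ Groupoid.inv g) h hh
        simpa [Category.assoc] using this⟩
      map_add' := fun f f' => rfl
      map_smul' := fun c f => rfl }
  map_id a := by
    apply ModuleCat.hom_ext
    apply LinearMap.ext
    intro f
    apply Subtype.ext
    funext k
    show f.1 ⟨k.1, k.2 ≫ Groupoid.inv (𝟙 a)⟩ = f.1 k
    simp [Groupoid.inv_eq_inv]
  map_comp := fun {a a' a''} g g' => by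
    apply ModuleCat.hom_ext
    apply LinearMap.ext
    intro f
    apply Subtype.ext
    funext k
    show f.1 ⟨k.1, k.2 ≫ Groupoid.inv (g ≫ g')⟩ =
      f.1 ⟨k.1, (k.2 ≫ Groupoid.inv g') ≫ Groupoid.inv g⟩
    simp [Groupoid.inv_eq_inv]


section Aux

open scoped Classical

variable (H : Subgroupoid G)

/-- The indicator function of the `H`-arrows into `b`, as an element of `Y_H(b)`. -/
noncomputable def eH (b : G) : YHsub H b :=
  ⟨fun x => if x.2 ∈ H.arrows x.1 b then 1 else 0, by
    intro y z g h hh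
    exact if_congr (H.mul_mem_cancel_left hh) rfl rfl⟩

/-- The number of `H`-arrows out of `t`, as a complex number. -/
noncomputable def Mout [Fintype G] [∀ a b : G, Fintype (a ⟶ b)] (t : G) : ℂ :=
  ∑ x : Σ z : G, t ⟶ z, if x.2 ∈ H.arrows t x.1 then 1 else 0

/-- The number of `H`-arrows into `b`, as a complex number. -/
noncomputable def MinH [Fintype G] [∀ a b : G, Fintype (a ⟶ b)] (b : G) : ℂ :=
  ∑ x : Σ y : G, y ⟶ b, if x.2 ∈ H.arrows x.1 b then 1 else 0

lemma Mout_ne_zero [Fintype G] [∀ a b : G, Fintype (a ⟶ b)] (hH : H.IsWide) (t : G) :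
    Mout H t ≠ 0 := by
  rw [Mout, Finset.sum_boole]
  exact Nat.cast_ne_zero.2 (Finset.card_ne_zero_of_mem
    (Finset.mem_filter.2 ⟨Finset.mem_univ (⟨t, 𝟙 t⟩ : Σ z : G, t ⟶ z), hH.id_mem t⟩))

lemma MinH_ne_zero [Fintype G] [∀ a b : G, Fintype (a ⟶ b)] (hH : H.IsWide) (b : G) :
    MinH H b ≠ 0 := by
  rw [MinH, Finset.sum_boole]
  exact Nat.cast_ne_zero.2 (Finset.card_ne_zero_of_mem
    (Finset.mem_filter.2 ⟨Finset.mem_univ (⟨b, 𝟙 b⟩ : Σ y : G, y ⟶ b), hH.id_mem b⟩))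

lemma Mout_eq [Fintype G] [∀ a b : G, Fintype (a ⟶ b)] {s b : G} {h : s ⟶ b}
    (hh : h ∈ H.arrows s b) : Mout H s = Mout H b := by
  refine Fintype.sum_equiv
    (Equiv.sigmaCongrRight fun z =>
      ⟨fun (u : s ⟶ z) => Groupoid.inv h ≫ u, fun (v : b ⟶ z) => h ≫ v,
        fun u => by simp [Groupoid.inv_eq_inv], fun v => by simp [Groupoid.inv_eq_inv]⟩)
    _ _ fun x => ?_
  exact if_congr (H.mul_mem_cancel_left (H.inv hh)).symm rfl rfl

lemma count_lemma [Fintype G] [∀ a b : G, Fintype (a ⟶ b)] {b t : G} (m : t ⟶ b) :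
    (∑ x : Σ y : G, y ⟶ b,
      if m ≫ Groupoid.inv x.2 ∈ H.arrows t x.1 then (1 : ℂ) else 0) = Mout H t := by
  refine (Fintype.sum_equiv
    (Equiv.sigmaCongrRight fun z =>
      ⟨fun (u : t ⟶ z) => Groupoid.inv u ≫ m, fun (v : z ⟶ b) => m ≫ Groupoid.inv v,
        fun u => by simp [Groupoid.inv_eq_inv], fun v => by simp [Groupoid.inv_eq_inv]⟩)
    _ _ fun x => ?_).symm
  show _ = if m ≫ Groupoid.inv (Groupoid.inv x.2 ≫ m) ∈ H.arrows t x.1 then (1 : ℂ) else 0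
  simp [Groupoid.inv_eq_inv]

variable {K : Subgroupoid G}

/-- The integral operator attached to a double-coset invariant function. -/
noncomputable def theta [Fintype G] [∀ a b : G, Fintype (a ⟶ b)] (H K : Subgroupoid G)
    (hH : H.IsWide) (φ : dcFun H K) : YHfun H ⟶ YHfun K where
  app b := ModuleCat.ofHom
    { toFun := fun f => ⟨fun m => ∑ x : Σ y : G, y ⟶ b,
        φ.1 ⟨m.1, x.1, m.2 ≫ Groupoid.inv x.2⟩ * f.1 x, by
          intro y z g k hk
          refine Finset.sum_congr rfl fun x _ => ?_
          congr 1
          have := φ.2 (g ≫ Groupoid.inv x.2) (𝟙 x.1) k (hH.id_mem x.1) hk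
          simpa [Groupoid.inv_eq_inv] using this⟩
      map_add' := fun f f' => Subtype.ext (funext fun m => by
        show (∑ x : Σ y : G, y ⟶ b, φ.1 ⟨m.1, x.1, m.2 ≫ Groupoid.inv x.2⟩ *
            (f.1 x + f'.1 x))
          = (∑ x : Σ y : G, y ⟶ b, φ.1 ⟨m.1, x.1, m.2 ≫ Groupoid.inv x.2⟩ * f.1 x)
            + ∑ x : Σ y : G, y ⟶ b, φ.1 ⟨m.1, x.1, m.2 ≫ Groupoid.inv x.2⟩ * f'.1 x
        simp [mul_add, Finset.sum_add_distrib])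
      map_smul' := fun c f => Subtype.ext (funext fun m => by
        show (∑ x : Σ y : G, y ⟶ b, φ.1 ⟨m.1, x.1, m.2 ≫ Groupoid.inv x.2⟩ *
            (c * f.1 x))
          = c * ∑ x : Σ y : G, y ⟶ b, φ.1 ⟨m.1, x.1, m.2 ≫ Groupoid.inv x.2⟩ * f.1 x
        simp [Finset.mul_sum, mul_left_comm]) }
  naturality := fun {b b'} g => by
    ext f
    apply Subtype.ext
    funext m
    show (∑ x : Σ y : G, y ⟶ b', φ.1 ⟨m.1, x.1, m.2 ≫ Groupoid.inv x.2⟩ *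
        f.1 ⟨x.1, x.2 ≫ Groupoid.inv g⟩)
      = ∑ x : Σ y : G, y ⟶ b,
          φ.1 ⟨m.1, x.1, (m.2 ≫ Groupoid.inv g) ≫ Groupoid.inv x.2⟩ * f.1 x
    refine (Fintype.sum_equiv
      (Equiv.sigmaCongrRight fun y =>
        ⟨fun (u : y ⟶ b) => u ≫ g, fun (v : y ⟶ b') => v ≫ Groupoid.inv g,
          fun u => by simp [Groupoid.inv_eq_inv], fun v => by simp [Groupoid.inv_eq_inv]⟩)
      _ _ fun x => ?_).symm
    show _ = φ.1 ⟨m.1, x.1, m.2 ≫ Groupoid.inv (x.2 ≫ g)⟩ * f.1 ⟨x.1, (x.2 ≫ g) ≫ Groupoid.inv g⟩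
    simp [Groupoid.inv_eq_inv]

/-- `theta` as a linear map. -/
noncomputable def thetaLin [Fintype G] [∀ a b : G, Fintype (a ⟶ b)] (H K : Subgroupoid G)
    (hH : H.IsWide) : dcFun H K →ₗ[ℂ] (YHfun H ⟶ YHfun K) where
  toFun φ := theta H K hH φ
  map_add' φ φ' := by
    apply NatTrans.ext
    funext b
    ext f
    apply Subtype.ext
    funext m
    show (∑ x : Σ y : G, y ⟶ b,
        (φ.1 ⟨m.1, x.1, m.2 ≫ Groupoid.inv x.2⟩ + φ'.1 ⟨m.1, x.1, m.2 ≫ Groupoid.inv x.2⟩)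
          * f.1 x)
      = (∑ x : Σ y : G, y ⟶ b, φ.1 ⟨m.1, x.1, m.2 ≫ Groupoid.inv x.2⟩ * f.1 x)
        + ∑ x : Σ y : G, y ⟶ b, φ'.1 ⟨m.1, x.1, m.2 ≫ Groupoid.inv x.2⟩ * f.1 x
    simp [add_mul, Finset.sum_add_distrib]
  map_smul' c φ := by
    apply NatTrans.ext
    funext b
    ext f
    apply Subtype.ext
    funext m
    show (∑ x : Σ y : G, y ⟶ b, (c * φ.1 ⟨m.1, x.1, m.2 ≫ Groupoid.inv x.2⟩) * f.1 x)
      = c * ∑ x : Σ y : G, y ⟶ b, φ.1 ⟨m.1, x.1, m.2 ≫ Groupoid.inv x.2⟩ * f.1 x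
    simp [Finset.mul_sum, mul_assoc]

lemma decomp [Fintype G] [∀ a b : G, Fintype (a ⟶ b)] (H : Subgroupoid G) (hH : H.IsWide)
    {b : G} (f : (YHsub H b)) :
    f = ∑ x : Σ y : G, y ⟶ b,
      (f.1 x / Mout H x.1) • (((YHfun H).map x.2 (eH H x.1)) : YHsub H b) := by
  apply Subtype.ext
  funext mm
  obtain ⟨t, m⟩ := mm
  let L : YHsub H b →ₗ[ℂ] ℂ :=
    { toFun := fun v => v.1 ⟨t, m⟩
      map_add' := fun _ _ => rfl
      map_smul' := fun _ _ => rfl }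
  have key : ∀ x : Σ y : G, y ⟶ b,
      (f.1 x / Mout H x.1) * L (((YHfun H).map x.2 (eH H x.1)) : YHsub H b)
        = if m ≫ Groupoid.inv x.2 ∈ H.arrows t x.1 then f.1 ⟨t, m⟩ / Mout H t else 0 := by
    intro x
    show (f.1 x / Mout H x.1) *
        (if m ≫ Groupoid.inv x.2 ∈ H.arrows t x.1 then (1 : ℂ) else 0) = _
    by_cases hx : m ≫ Groupoid.inv x.2 ∈ H.arrows t x.1
    · rw [if_pos hx, mul_one, if_pos hx]
      have h1 : f.1 ⟨t, m⟩ = f.1 x := by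
        have := f.2 t x.1 x.2 (m ≫ Groupoid.inv x.2) hx
        simpa [Groupoid.inv_eq_inv] using this
      rw [← h1, ← Mout_eq H hx]
    · rw [if_neg hx, mul_zero, if_neg hx]
  refine Eq.symm ?_
  calc L (∑ x : Σ y : G, y ⟶ b,
        (f.1 x / Mout H x.1) • (((YHfun H).map x.2 (eH H x.1)) : YHsub H b))
      = ∑ x : Σ y : G, y ⟶ b,
          (f.1 x / Mout H x.1) * L (((YHfun H).map x.2 (eH H x.1)) : YHsub H b) := by
        refine (map_sum L _ _).trans ?_
        exact Finset.sum_congr rfl fun x _ => (map_smul L _ _).trans (smul_eq_mul _ _)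
    _ = ∑ x : Σ y : G, y ⟶ b,
          (if m ≫ Groupoid.inv x.2 ∈ H.arrows t x.1 then f.1 ⟨t, m⟩ / Mout H t else 0) :=
        Finset.sum_congr rfl fun x _ => key x
    _ = ∑ x : Σ y : G, y ⟶ b,
          (f.1 ⟨t, m⟩ / Mout H t) *
            (if m ≫ Groupoid.inv x.2 ∈ H.arrows t x.1 then 1 else 0) :=
        Finset.sum_congr rfl fun x _ => by split <;> simp
    _ = (f.1 ⟨t, m⟩ / Mout H t) * Mout H t := by rw [← Finset.mul_sum, count_lemma H m]
    _ = f.1 ⟨t, m⟩ := div_mul_cancel₀ _ (Mout_ne_zero H hH t)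

lemma theta_apply_eq [Fintype G] [∀ a b : G, Fintype (a ⟶ b)] (H K : Subgroupoid G)
    (hH : H.IsWide) (θ : YHfun H ⟶ YHfun K) {b : G} (f : YHsub H b) (m : Σ t : G, t ⟶ b) :
    (θ.app b f).1 m = ∑ x : Σ y : G, y ⟶ b,
      (f.1 x / Mout H x.1) * (θ.app x.1 (eH H x.1)).1 ⟨m.1, m.2 ≫ Groupoid.inv x.2⟩ := by
  let L : YHsub H b →ₗ[ℂ] ℂ :=
    { toFun := fun v => (θ.app b v).1 m
      map_add' := fun v w => congrArg (fun u => u.1 m) (map_add (θ.app b).hom v w)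
      map_smul' := fun c v => congrArg (fun u => u.1 m) (map_smul (θ.app b).hom c v) }
  calc (θ.app b f).1 m
      = L (∑ x : Σ y : G, y ⟶ b,
          (f.1 x / Mout H x.1) • (((YHfun H).map x.2 (eH H x.1)) : YHsub H b)) :=
        congrArg L (decomp H hH f)
    _ = ∑ x : Σ y : G, y ⟶ b,
          (f.1 x / Mout H x.1) * (θ.app x.1 (eH H x.1)).1 ⟨m.1, m.2 ≫ Groupoid.inv x.2⟩ := by
        refine (map_sum L _ _).trans ?_
        refine Finset.sum_congr rfl fun x _ => ?_
        refine (map_smul L _ _).trans ?_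
        rw [smul_eq_mul]
        congr 1
        have nat := congrArg
          (fun (F : (YHfun H).obj x.1 ⟶ (YHfun K).obj b) => (F (eH H x.1)).1 m)
          (θ.naturality x.2)
        exact nat

end Aux

/-- for wide subgroupoids `H`, `K` of a finite groupoid `G`, the space
`ℂ_{H\G/K}` is `ℂ`-linearly isomorphic to the space of natural transformations
`Y_H ⟶ Y_K`; in particular the dimension of the latter equals the number of double
cosets `|H\G/K|`. -/
theorem stmt_17 [Fintype G] [∀ a b : G, Fintype (a ⟶ b)] (H K : Subgroupoid G)
    (hH : H.IsWide) (hK : K.IsWide) :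
    Nonempty ((dcFun H K) ≃ₗ[ℂ] (YHfun H ⟶ YHfun K)) ∧
    Module.finrank ℂ (YHfun H ⟶ YHfun K) =
      Nat.card (Quot (fun m m' : Σ a b : G, a ⟶ b => m' ∈ doubleCoset H K m.2.2)) := by
  classical
  -- injectivity of the integral-operator map
  have inj : Function.Injective (thetaLin H K hH) := by
    rw [injective_iff_map_eq_zero]
    intro φ h0
    apply Subtype.ext
    funext m
    obtain ⟨a, b, g⟩ := m
    have h1 := congrArg
      (fun θ : YHfun H ⟶ YHfun K => (θ.app b (eH H b)).1 ⟨a, g⟩) h0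
    have h2 : ∀ x : Σ y : G, y ⟶ b,
        φ.1 ⟨a, x.1, g ≫ Groupoid.inv x.2⟩ *
          (if x.2 ∈ H.arrows x.1 b then (1 : ℂ) else 0)
          = φ.1 ⟨a, b, g⟩ * (if x.2 ∈ H.arrows x.1 b then 1 else 0) := by
      intro x
      by_cases hx : x.2 ∈ H.arrows x.1 b
      · rw [if_pos hx, mul_one, mul_one]
        have := φ.2 g x.2 (𝟙 a) hx (hK.id_mem a)
        simpa [Groupoid.inv_eq_inv] using this
      · rw [if_neg hx, mul_zero, mul_zero]
    have h3 : φ.1 ⟨a, b, g⟩ * MinH H b = 0 := by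
      have lhs_eq : ((thetaLin H K hH φ).app b (eH H b)).1 ⟨a, g⟩
          = φ.1 ⟨a, b, g⟩ * MinH H b := by
        show (∑ x : Σ y : G, y ⟶ b, φ.1 ⟨a, x.1, g ≫ Groupoid.inv x.2⟩ *
            (if x.2 ∈ H.arrows x.1 b then (1 : ℂ) else 0)) = _
        rw [Finset.sum_congr rfl fun x _ => h2 x, ← Finset.mul_sum]
        rfl
      rw [← lhs_eq]
      rw [h1]
      rfl
    have := mul_eq_zero.1 h3
    exact this.resolve_right (MinH_ne_zero H hH b)
  -- surjectivity
  have surj : Function.Surjective (thetaLin H K hH) := by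
    intro θ
    refine ⟨⟨fun m : Σ a b : G, a ⟶ b =>
        (θ.app m.2.1 (eH H m.2.1)).1 ⟨m.1, m.2.2⟩ / Mout H m.2.1, ?_⟩, ?_⟩
    · intro a b s t g h k hh hk
      show (θ.app s (eH H s)).1 ⟨t, k ≫ g ≫ Groupoid.inv h⟩ / Mout H s
          = (θ.app b (eH H b)).1 ⟨a, g⟩ / Mout H b
      have hMout : Mout H s = Mout H b := Mout_eq H hh
      have he : eH H s = (YHfun H).map (Groupoid.inv h) (eH H b) := by
        apply Subtype.ext
        funext x
        show (if x.2 ∈ H.arrows x.1 s then (1 : ℂ) else 0)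
          = if x.2 ≫ Groupoid.inv (Groupoid.inv h) ∈ H.arrows x.1 b then 1 else 0
        refine if_congr ?_ rfl rfl
        constructor
        · intro hx
          have := H.mul hx hh
          simpa [Groupoid.inv_eq_inv] using this
        · intro hx
          have := H.mul hx (H.inv hh)
          simpa [Groupoid.inv_eq_inv] using this
      have nat := congrArg
        (fun (F : (YHfun H).obj b ⟶ (YHfun K).obj s) => F (eH H b))
        (θ.naturality (Groupoid.inv h))
      have happ : θ.app s (eH H s)
          = (YHfun K).map (Groupoid.inv h) (θ.app b (eH H b)) := by
        rw [he]
        exact nat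
      have hval : (θ.app s (eH H s)).1 ⟨t, k ≫ g ≫ Groupoid.inv h⟩
          = (θ.app b (eH H b)).1 ⟨t, k ≫ g⟩ := by
        rw [happ]
        show (θ.app b (eH H b)).1
            ⟨t, (k ≫ g ≫ Groupoid.inv h) ≫ Groupoid.inv (Groupoid.inv h)⟩ = _
        simp [Groupoid.inv_eq_inv]
      have hK' : (θ.app b (eH H b)).1 ⟨t, k ≫ g⟩ = (θ.app b (eH H b)).1 ⟨a, g⟩ :=
        (θ.app b (eH H b)).2 t a g k hk
      rw [hval, hK', hMout]
    apply NatTrans.ext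
    funext b
    ext f
    apply Subtype.ext
    funext m
    show (∑ x : Σ y : G, y ⟶ b,
        ((θ.app x.1 (eH H x.1)).1 ⟨m.1, m.2 ≫ Groupoid.inv x.2⟩ / Mout H x.1) * f.1 x)
      = (θ.app b f).1 m
    rw [theta_apply_eq H K hH θ f m]
    exact Finset.sum_congr rfl fun x _ => by ring
  have e1 : (dcFun H K) ≃ₗ[ℂ] (YHfun H ⟶ YHfun K) :=
    LinearEquiv.ofBijective (thetaLin H K hH) ⟨inj, surj⟩
  refine ⟨⟨e1⟩, ?_⟩
  -- the double-coset quotient computation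
  set r := fun m m' : Σ a b : G, a ⟶ b => m' ∈ doubleCoset H K m.2.2 with hr
  have e2 : (dcFun H K) ≃ₗ[ℂ] (Quot r → ℂ) :=
    { toFun := fun φ => Quot.lift φ.1 (by
        intro m m' hrel
        obtain ⟨a, b, g⟩ := m
        obtain ⟨s, t, h, k, hh, hk, rfl⟩ := hrel
        have := φ.2 g (Groupoid.inv h) k (H.inv hh) hk
        simpa [Groupoid.inv_eq_inv] using this.symm)
      invFun := fun ψ => ⟨fun m => ψ (Quot.mk r m), by
        intro a b s t g h k hh hk
        exact (congrArg ψ (Quot.sound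
          (⟨s, t, Groupoid.inv h, k, H.inv hh, hk, rfl⟩ :
            r ⟨a, b, g⟩ ⟨t, s, k ≫ g ≫ Groupoid.inv h⟩))).symm⟩
      map_add' := fun φ φ' => funext fun q => Quot.inductionOn q fun m => rfl
      map_smul' := fun c φ => funext fun q => Quot.inductionOn q fun m => rfl
      left_inv := fun φ => Subtype.ext (funext fun m => rfl)
      right_inv := fun ψ => funext fun q => Quot.inductionOn q fun m => rfl }
  haveI : Finite (Quot r) := Quot.finite r
  haveI : Fintype (Quot r) := Fintype.ofFinite _
  rw [← LinearEquiv.finrank_eq e1, LinearEquiv.finrank_eq e2,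
    Module.finrank_fintype_fun_eq_card, Nat.card_eq_fintype_card]
end
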